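/- Let V be a finite-dimensional real vector space, and let η¹,…,ηᵏ ∈ V* and a family of alternating bilinear forms ω¹,…,ωᵏ on V be given. Set K = ⋂_α ker ηᵅ and R = ⋂_α ker ωᵅ (where ker ωᵅ = {v : ωᵅ(v,·)=0}). If K has codimension k, R has dimension k, and K ∩ R = 0, then there exist unique vectors R₁,…,R_k ∈ V with ηᵝ(R_α) = δ_α^β and ωᵝ(R_α,·) = 0 for all α,β, and these vectors form a basis of R. -/
import Mathlib


open Module

/-- Pointwise linear-algebra content of existence and uniqueness of Reeb vector fields
on a k-contact manifold. -/
theorem stmt0 (k : ℕ) (V : Type*) [AddCommGroup V] [Module ℝ V] [FiniteDimensional ℝ V]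
    (η : Fin k → V →ₗ[ℝ] ℝ) (ω : Fin k → V →ₗ[ℝ] V →ₗ[ℝ] ℝ)
    (halt : ∀ α v, ω α v v = 0)
    (hK : finrank ℝ ↥(⨅ α, LinearMap.ker (η α)) + k = finrank ℝ V)
    (hR : finrank ℝ ↥(⨅ α, LinearMap.ker (ω α)) = k)
    (hKR : (⨅ α, LinearMap.ker (η α)) ⊓ (⨅ α, LinearMap.ker (ω α)) = ⊥) :
    ∃! R : Fin k → V,
      (∀ α β, η β (R α) = if β = α then 1 else 0) ∧
      (∀ α β, ω β (R α) = 0) ∧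
      LinearIndependent ℝ R ∧
      Submodule.span ℝ (Set.range R) = ⨅ α, LinearMap.ker (ω α) := by
  classical
  set Rs : Submodule ℝ V := ⨅ α, LinearMap.ker (ω α) with hRsdef
  let φ : Rs →ₗ[ℝ] (Fin k → ℝ) := (LinearMap.pi (fun α => η α)).comp Rs.subtype
  have hφ : ∀ (x : Rs) (α : Fin k), φ x α = η α (x : V) := fun x α => rfl
  have hinj : Function.Injective φ := by
    rw [← LinearMap.ker_eq_bot]
    ext x
    simp only [LinearMap.mem_ker, Submodule.mem_bot]
    constructor
    · intro hx
      have hmemK : (x : V) ∈ (⨅ α, LinearMap.ker (η α)) := by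
        simp only [Submodule.mem_iInf, LinearMap.mem_ker]
        intro α
        have := congrFun hx α
        simpa [hφ] using this
      have hm : (x : V) ∈ (⨅ α, LinearMap.ker (η α)) ⊓ Rs := ⟨hmemK, x.2⟩
      rw [hKR] at hm
      exact Subtype.ext (by simpa using hm)
    · rintro rfl; simp
  have hdim : finrank ℝ Rs = finrank ℝ (Fin k → ℝ) := by simp [← hRsdef, hR]
  let e : Rs ≃ₗ[ℝ] (Fin k → ℝ) := φ.linearEquivOfInjective hinj hdim
  have he : ∀ x, e x = φ x := fun x => LinearMap.linearEquivOfInjective_apply hinj hdim x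
  -- the candidate basis of Rs
  let B : Basis (Fin k) ℝ Rs := (Pi.basisFun ℝ (Fin k)).map e.symm
  have heB : ∀ α, e (B α) = Pi.single α 1 := by
    intro α
    simp [B, Pi.basisFun_apply]
  have hηB : ∀ α β, η β ((B α : V)) = if β = α then 1 else 0 := by
    intro α β
    have := congrFun (heB α) β
    rw [he] at this
    rw [hφ] at this
    rw [this, Pi.single_apply]
  refine ⟨fun α => (B α : V), ⟨?_, ?_, ?_, ?_⟩, ?_⟩
  · exact fun α β => hηB α β
  · intro α β
    exact LinearMap.mem_ker.mp ((Submodule.mem_iInf _).mp (B α).2 β)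
  · exact B.linearIndependent.map' Rs.subtype (Submodule.ker_subtype Rs)
  · have : Set.range (fun α => ((B α : V))) = Rs.subtype '' (Set.range B) := by
      ext v; simp [Set.range_comp]
    rw [this, Submodule.span_image, B.span_eq, Submodule.map_top, Submodule.range_subtype]
  · rintro R' ⟨h1, h2, _, _⟩
    funext α
    have hmem : R' α ∈ Rs := by
      exact (Submodule.mem_iInf _).mpr fun β => LinearMap.mem_ker.mpr (h2 α β)
    have : e ⟨R' α, hmem⟩ = Pi.single α 1 := by
      funext β
      rw [he, hφ, h1 α β, Pi.single_apply]
    have h3 : (⟨R' α, hmem⟩ : Rs) = B α := by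
      apply e.injective
      rw [this, heB]
    exact congrArg Subtype.val h3
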